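/- Suppose the Middle algorithm is correct on the directed graph G(V,E) tolerating up to f Byzantine faults. Then both of the following hold: (a) every node v ∈ V satisfies |N_v^-| ≥ 3f; and (b) for every partition of V into sets F, L, C, R such that L and R are nonempty and |F| ≤ f, either C ∪ R ⇒ L or L ∪ C ⇒ R. -/

import Mathlib

open Finset Filter

variable {V : Type} [Fintype V] [DecidableEq V]

/-- Incoming neighbors of node `v` in the directed graph with edge set `E`. -/
def NinSet (E : Finset (V × V)) (v : V) : Finset V :=
  Finset.univ.filter (fun u => (u, v) ∈ E)

/-- `A ⇒ B`: there is a node in `B` with more than 1/3 of its incoming neighbors in `A`. -/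
def ImpRel (E : Finset (V × V)) (A B : Finset V) : Prop :=
  ∃ v ∈ B, (NinSet E v).card < 3 * ((NinSet E v) ∩ A).card

/-- `in(A ⇒ B)`: the set of nodes in `B` with more than 1/3 of incoming neighbors in `A`. -/
def inRel (E : Finset (V × V)) (A B : Finset V) : Finset V :=
  B.filter (fun v => (NinSet E v).card < 3 * ((NinSet E v) ∩ A).card)

/-- `A` propagates to `B` in `l` steps. -/
def PropagatesIn (E : Finset (V × V)) (A B : Finset V) (l : ℕ) : Prop :=
  0 < l ∧ ∃ As Bs : ℕ → Finset V,
    As 0 = A ∧ Bs 0 = B ∧ As l = A ∪ B ∧ Bs l = ∅ ∧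
    (∀ τ < l, Bs τ ≠ ∅) ∧
    (∀ τ < l, ImpRel E (As τ) (Bs τ) ∧
      As (τ + 1) = As τ ∪ inRel E (As τ) (Bs τ) ∧
      Bs (τ + 1) = Bs τ \ inRel E (As τ) (Bs τ))

/-- `A` propagates to `B` (in some number of steps). -/
def Propagates (E : Finset (V × V)) (A B : Finset V) : Prop :=
  ∃ l, PropagatesIn E A B l

/-- The sufficient condition for parameter `f`. -/
def SuffCond (E : Finset (V × V)) (f : ℕ) : Prop :=
  (∀ v : V, 3 * f ≤ (NinSet E v).card) ∧
  (∀ F L C R : Finset V,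
    F ∪ L ∪ C ∪ R = Finset.univ →
    Disjoint F L → Disjoint F C → Disjoint F R →
    Disjoint L C → Disjoint L R → Disjoint C R →
    L.Nonempty → R.Nonempty → F.card ≤ f →
    ImpRel E (C ∪ R) L ∨ ImpRel E (L ∪ C) R)

/-- The weight `a_i = 1/(|N_i^-| - 2⌊|N_i^-|/3⌋ + 1)` used in the Middle algorithm. -/
noncomputable def middleWeight (E : Finset (V × V)) (i : V) : ℝ :=
  (((NinSet E i).card - 2 * ((NinSet E i).card / 3) + 1 : ℕ) : ℝ)⁻¹

/-- `α = min_{i ∈ V} a_i`. -/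
noncomputable def alphaMin (E : Finset (V × V)) : ℝ :=
  ⨅ i : V, middleWeight E i

/-- An execution of the Middle algorithm on graph `E` with faulty set `F`. -/
structure MiddleExec (E : Finset (V × V)) (F : Finset V) where
  /-- `state i t` is the state `v_i[t]` (meaningful for fault-free `i`). -/
  state : V → ℕ → ℝ
  /-- `w t i j` is the value node `i` receives from `j ∈ N_i^-` in iteration `t ≥ 1`. -/
  w : ℕ → V → V → ℝ
  /-- the set `B` at node `i` in iteration `t`. -/
  Bs : ℕ → V → Finset V
  /-- the set `T` at node `i` in iteration `t`. -/
  Ts : ℕ → V → Finset V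
  /-- the set `M` at node `i` in iteration `t`. -/
  Ms : ℕ → V → Finset V
  w_honest : ∀ t, 1 ≤ t → ∀ i, i ∉ F → ∀ j ∈ NinSet E i, j ∉ F →
    w t i j = state j (t - 1)
  part_union : ∀ t, 1 ≤ t → ∀ i, i ∉ F → Bs t i ∪ Ts t i ∪ Ms t i = NinSet E i
  disj_BT : ∀ t, 1 ≤ t → ∀ i, i ∉ F → Disjoint (Bs t i) (Ts t i)
  disj_BM : ∀ t, 1 ≤ t → ∀ i, i ∉ F → Disjoint (Bs t i) (Ms t i)
  disj_TM : ∀ t, 1 ≤ t → ∀ i, i ∉ F → Disjoint (Ts t i) (Ms t i)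
  card_B : ∀ t, 1 ≤ t → ∀ i, i ∉ F → (Bs t i).card = (NinSet E i).card / 3
  card_T : ∀ t, 1 ≤ t → ∀ i, i ∉ F → (Ts t i).card = (NinSet E i).card / 3
  le_BM : ∀ t, 1 ≤ t → ∀ i, i ∉ F → ∀ j ∈ Bs t i, ∀ k ∈ Ms t i, w t i j ≤ w t i k
  le_MT : ∀ t, 1 ≤ t → ∀ i, i ∉ F → ∀ j ∈ Ms t i, ∀ k ∈ Ts t i, w t i j ≤ w t i k
  update : ∀ t, 1 ≤ t → ∀ i, i ∉ F →
    state i t = middleWeight E i * (state i (t - 1) + ∑ j ∈ Ms t i, w t i j)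

/-- `U[t]`: the maximum state among fault-free nodes at the end of iteration `t`. -/
noncomputable def Umax {E : Finset (V × V)} {F : Finset V}
    (exec : MiddleExec E F) (t : ℕ) : ℝ :=
  ⨆ i : {i : V // i ∉ F}, exec.state i.1 t

/-- `μ[t]`: the minimum state among fault-free nodes at the end of iteration `t`. -/
noncomputable def muMin {E : Finset (V × V)} {F : Finset V}
    (exec : MiddleExec E F) (t : ℕ) : ℝ :=
  ⨅ i : {i : V // i ∉ F}, exec.state i.1 t

/-- The Middle algorithm is correct on `E` tolerating `f` Byzantine faults:
for every faulty set `F` with `|F| ≤ f` and every execution, validity and convergence hold. -/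
def MiddleCorrect (E : Finset (V × V)) (f : ℕ) : Prop :=
  ∀ F : Finset V, F.card ≤ f → ∀ exec : MiddleExec E F,
    (∀ t : ℕ, 1 ≤ t → muMin exec (t - 1) ≤ muMin exec t ∧ Umax exec t ≤ Umax exec (t - 1)) ∧
    Filter.Tendsto (fun t => Umax exec t - muMin exec t) Filter.atTop (nhds 0)

set_option linter.unusedSectionVars false

lemma exists_bottom (g : V → ℝ) (s : Finset V) :
    ∀ k, k ≤ s.card → ∃ b, b ⊆ s ∧ b.card = k ∧ ∀ x ∈ b, ∀ y ∈ s \ b, g x ≤ g y := by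
  intro k
  induction k with
  | zero =>
    intro _
    exact ⟨∅, by simp, by simp, by simp⟩
  | succ k ih =>
    intro hk
    obtain ⟨b, hbs, hbc, hord⟩ := ih (Nat.le_of_succ_le hk)
    have hne : (s \ b).Nonempty := by
      rw [← Finset.card_pos, Finset.card_sdiff_of_subset hbs, hbc]; omega
    obtain ⟨m, hm, hmin⟩ := Finset.exists_min_image (s \ b) g hne
    have hms : m ∈ s := (Finset.mem_sdiff.1 hm).1
    have hmb : m ∉ b := (Finset.mem_sdiff.1 hm).2
    refine ⟨insert m b, Finset.insert_subset hms hbs, ?_, ?_⟩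
    · rw [Finset.card_insert_of_notMem hmb, hbc]
    · intro x hx y hy
      have hy' : y ∈ s \ b := by
        rw [Finset.mem_sdiff] at hy ⊢
        exact ⟨hy.1, fun h => hy.2 (Finset.mem_insert_of_mem h)⟩
      rcases Finset.mem_insert.1 hx with rfl | hx
      · exact hmin y hy'
      · exact hord x hx y hy'

structure IsTri (g : V → ℝ) (s : Finset V) (k : ℕ)
    (B T M : Finset V) : Prop where
  union : B ∪ T ∪ M = s
  dBT : Disjoint B T
  dBM : Disjoint B M
  dTM : Disjoint T M
  cB : B.card = k
  cT : T.card = k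
  cM : M.card = s.card - 2 * k
  hBM : ∀ j ∈ B, ∀ m ∈ M, g j ≤ g m
  hMT : ∀ m ∈ M, ∀ j ∈ T, g m ≤ g j

lemma exists_tri (g : V → ℝ) (s : Finset V) (k : ℕ) (h2 : 2 * k ≤ s.card) :
    ∃ p : Finset V × Finset V × Finset V, IsTri g s k p.1 p.2.1 p.2.2 := by
  obtain ⟨B, hBs, hBc, hBord⟩ := exists_bottom g s k (by omega)
  have hcsd : (s \ B).card = s.card - k := by rw [Finset.card_sdiff_of_subset hBs, hBc]
  obtain ⟨T, hTs, hTc, hTord⟩ := exists_bottom (fun x => -g x) (s \ B) k (by omega)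
  refine ⟨⟨B, T, (s \ B) \ T⟩, ?_, ?_, ?_, ?_, hBc, hTc, ?_, ?_, ?_⟩
  · -- union
    apply Finset.Subset.antisymm
    · intro x hx
      rcases Finset.mem_union.1 hx with hx | hx
      · rcases Finset.mem_union.1 hx with hx | hx
        · exact hBs hx
        · exact (Finset.mem_sdiff.1 (hTs hx)).1
      · exact (Finset.mem_sdiff.1 (Finset.mem_sdiff.1 hx).1).1
    · intro x hx
      by_cases hxB : x ∈ B
      · exact Finset.mem_union_left _ (Finset.mem_union_left _ hxB)
      by_cases hxT : x ∈ T
      · exact Finset.mem_union_left _ (Finset.mem_union_right _ hxT)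
      exact Finset.mem_union_right _
        (Finset.mem_sdiff.2 ⟨Finset.mem_sdiff.2 ⟨hx, hxB⟩, hxT⟩)
  · -- B, T disjoint
    exact Finset.disjoint_left.2 fun a ha hT => (Finset.mem_sdiff.1 (hTs hT)).2 ha
  · exact Finset.disjoint_left.2 fun a ha hM =>
      (Finset.mem_sdiff.1 (Finset.mem_sdiff.1 hM).1).2 ha
  · exact Finset.disjoint_left.2 fun a ha hM => (Finset.mem_sdiff.1 hM).2 ha
  · rw [Finset.card_sdiff_of_subset hTs, hcsd, hTc]; omega
  · intro j hj m hm
    exact hBord j hj m (Finset.mem_sdiff.1 hm).1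
  · intro m hm j hj
    have := hTord j hj m hm
    simpa using this

lemma two_mul_div_three_le (n : ℕ) : 2 * (n / 3) ≤ n := by omega

noncomputable def triChoice (g : V → ℝ) (s : Finset V) :
    Finset V × Finset V × Finset V :=
  (exists_tri g s (s.card / 3) (two_mul_div_three_le s.card)).choose

lemma triChoice_spec (g : V → ℝ) (s : Finset V) :
    IsTri g s (s.card / 3) (triChoice g s).1 (triChoice g s).2.1 (triChoice g s).2.2 :=
  (exists_tri g s (s.card / 3) (two_mul_div_three_le s.card)).choose_spec

lemma tri_M_lo {g : V → ℝ} {s : Finset V} {k : ℕ} {B T M : Finset V}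
    (tri : IsTri g s k B T M) {lo : ℝ}
    (hlo : ∀ j ∈ s, lo ≤ g j)
    (hc : (s.filter fun j => lo < g j).card ≤ k) :
    ∀ m ∈ M, g m = lo := by
  intro m hm
  have hms : m ∈ s := by
    rw [← tri.union]; exact Finset.mem_union_right _ hm
  by_contra hne
  have hlt : lo < g m := lt_of_le_of_ne (hlo m hms) (Ne.symm hne)
  have hsub : insert m T ⊆ s.filter fun j => lo < g j := by
    intro x hx
    rcases Finset.mem_insert.1 hx with rfl | hx
    · exact Finset.mem_filter.2 ⟨hms, hlt⟩
    · refine Finset.mem_filter.2 ⟨?_, lt_of_lt_of_le hlt (tri.hMT m hm x hx)⟩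
      rw [← tri.union]
      exact Finset.mem_union_left _ (Finset.mem_union_right _ hx)
  have hmT : m ∉ T := Finset.disjoint_right.1 tri.dTM hm
  have := Finset.card_le_card hsub
  rw [Finset.card_insert_of_notMem hmT, tri.cT] at this
  omega

lemma tri_M_hi {g : V → ℝ} {s : Finset V} {k : ℕ} {B T M : Finset V}
    (tri : IsTri g s k B T M) {hi : ℝ}
    (hhi : ∀ j ∈ s, g j ≤ hi)
    (hc : (s.filter fun j => g j < hi).card ≤ k) :
    ∀ m ∈ M, g m = hi := by
  intro m hm
  have hms : m ∈ s := by
    rw [← tri.union]; exact Finset.mem_union_right _ hm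
  by_contra hne
  have hlt : g m < hi := lt_of_le_of_ne (hhi m hms) hne
  have hsub : insert m B ⊆ s.filter fun j => g j < hi := by
    intro x hx
    rcases Finset.mem_insert.1 hx with rfl | hx
    · exact Finset.mem_filter.2 ⟨hms, hlt⟩
    · refine Finset.mem_filter.2 ⟨?_, lt_of_le_of_lt (tri.hBM x hx m hm) hlt⟩
      rw [← tri.union]
      exact Finset.mem_union_left _ (Finset.mem_union_left _ hx)
  have hmB : m ∉ B := Finset.disjoint_right.1 tri.dBM hm
  have := Finset.card_le_card hsub
  rw [Finset.card_insert_of_notMem hmB, tri.cB] at this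
  omega

lemma tri_sum_ge_one {g : V → ℝ} {s : Finset V} {k : ℕ} {B T M : Finset V}
    (tri : IsTri g s k B T M)
    (hpos : ∀ j ∈ s, 0 ≤ g j)
    (hones : k < (s.filter fun j => 1 ≤ g j).card)
    (hM : M.Nonempty) :
    1 ≤ ∑ j ∈ M, g j := by
  have hMpos : ∀ j ∈ M, 0 ≤ g j := fun j hj =>
    hpos j (by rw [← tri.union]; exact Finset.mem_union_right _ hj)
  have hnsub : ¬(s.filter fun j => 1 ≤ g j) ⊆ T := by
    intro h
    have := Finset.card_le_card h
    rw [tri.cT] at this; omega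
  obtain ⟨p, hp, hpT⟩ := Finset.not_subset.1 hnsub
  have hps : p ∈ s := (Finset.mem_filter.1 hp).1
  have hp1 : 1 ≤ g p := (Finset.mem_filter.1 hp).2
  have hpu : p ∈ B ∪ T ∪ M := by rw [tri.union]; exact hps
  rcases Finset.mem_union.1 hpu with hpu | hpM
  · rcases Finset.mem_union.1 hpu with hpB | hpT'
    · -- p ∈ B : every element of M is ≥ 1
      obtain ⟨m, hm⟩ := hM
      calc (1:ℝ) ≤ g m := le_trans hp1 (tri.hBM p hpB m hm)
        _ ≤ ∑ j ∈ M, g j := Finset.single_le_sum hMpos hm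
    · exact absurd hpT' hpT
  · calc (1:ℝ) ≤ g p := hp1
      _ ≤ ∑ j ∈ M, g j := Finset.single_le_sum hMpos hpM

/-- The value node `i` receives from node `j`, when the previous states are `prev`:
faulty nodes (in `F`) send `fval i`, fault-free nodes send their state. -/
def rcvF (F : Finset V) (fval : V → ℝ) (prev : V → ℝ) (i j : V) : ℝ :=
  if j ∈ F then fval i else prev j

/-- The generic dynamics: every node applies the `Middle` update rule with the
partition chosen by `triChoice`, where faulty nodes send `fval i` to node `i`. -/
noncomputable def dyn (E : Finset (V × V)) (F : Finset V) (fval init : V → ℝ) :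
    ℕ → V → ℝ
  | 0 => init
  | (t+1) => fun i =>
      middleWeight E i * (dyn E F fval init t i +
        ∑ j ∈ (triChoice (rcvF F fval (dyn E F fval init t) i) (NinSet E i)).2.2,
          rcvF F fval (dyn E F fval init t) i j)

lemma dyn_succ (E : Finset (V × V)) (F : Finset V) (fval init : V → ℝ) (t : ℕ) (i : V) :
    dyn E F fval init (t+1) i =
      middleWeight E i * (dyn E F fval init t i +
        ∑ j ∈ (triChoice (rcvF F fval (dyn E F fval init t) i) (NinSet E i)).2.2,
          rcvF F fval (dyn E F fval init t) i j) := rfl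

/-- The execution of `Middle` built from the generic dynamics. -/
noncomputable def mkExec (E : Finset (V × V)) (F : Finset V) (fval init : V → ℝ) :
    MiddleExec E F where
  state := fun i t => dyn E F fval init t i
  w := fun t i j => rcvF F fval (dyn E F fval init (t-1)) i j
  Bs := fun t i => (triChoice (rcvF F fval (dyn E F fval init (t-1)) i) (NinSet E i)).1
  Ts := fun t i => (triChoice (rcvF F fval (dyn E F fval init (t-1)) i) (NinSet E i)).2.1
  Ms := fun t i => (triChoice (rcvF F fval (dyn E F fval init (t-1)) i) (NinSet E i)).2.2
  w_honest := fun t _ i _ j _ hjF => by simp [rcvF, hjF]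
  part_union := fun t _ i _ => (triChoice_spec _ _).union
  disj_BT := fun t _ i _ => (triChoice_spec _ _).dBT
  disj_BM := fun t _ i _ => (triChoice_spec _ _).dBM
  disj_TM := fun t _ i _ => (triChoice_spec _ _).dTM
  card_B := fun t _ i _ => (triChoice_spec _ _).cB
  card_T := fun t _ i _ => (triChoice_spec _ _).cT
  le_BM := fun t _ i _ => (triChoice_spec _ _).hBM
  le_MT := fun t _ i _ => (triChoice_spec _ _).hMT
  update := by
    intro t ht i _
    obtain ⟨t', rfl⟩ : ∃ t', t = t' + 1 := ⟨t - 1, (Nat.succ_pred_eq_of_pos ht).symm⟩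
    simp only [Nat.add_sub_cancel]
    exact dyn_succ E F fval init t' i

lemma middleWeight_pos (E : Finset (V × V)) (i : V) : 0 < middleWeight E i := by
  rw [middleWeight]
  have : (0:ℝ) < (((NinSet E i).card - 2 * ((NinSet E i).card / 3) + 1 : ℕ) : ℝ) := by
    exact_mod_cast Nat.succ_pos _
  exact inv_pos.2 this

lemma middleWeight_mul (E : Finset (V × V)) (i : V) :
    middleWeight E i *
      (((NinSet E i).card - 2 * ((NinSet E i).card / 3) + 1 : ℕ) : ℝ) = 1 := by
  rw [middleWeight]
  exact inv_mul_cancel₀ (by positivity)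

/-- States stay in `[0,1]` if faulty values and initial values are in `[0,1]`. -/
lemma dyn_bound (E : Finset (V × V)) (F : Finset V) (fval init : V → ℝ)
    (hf : ∀ i, 0 ≤ fval i ∧ fval i ≤ 1)
    (h0 : ∀ i, 0 ≤ init i ∧ init i ≤ 1) :
    ∀ t i, 0 ≤ dyn E F fval init t i ∧ dyn E F fval init t i ≤ 1 := by
  intro t
  induction t with
  | zero => exact h0
  | succ t ih =>
    intro i
    set g := rcvF F fval (dyn E F fval init t) i with hg
    have hgb : ∀ j, 0 ≤ g j ∧ g j ≤ 1 := by
      intro j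
      rw [hg, rcvF]
      by_cases hj : j ∈ F
      · simp only [hj, if_true]; exact hf i
      · simp only [hj, if_false]; exact ih j
    set M := (triChoice g (NinSet E i)).2.2 with hM
    have hMc : M.card = (NinSet E i).card - 2 * ((NinSet E i).card / 3) :=
      (triChoice_spec g (NinSet E i)).cM
    have hsum0 : 0 ≤ ∑ j ∈ M, g j :=
      Finset.sum_nonneg fun j _ => (hgb j).1
    have hsum1 : ∑ j ∈ M, g j ≤ (M.card : ℝ) := by
      calc ∑ j ∈ M, g j ≤ ∑ j ∈ M, (1:ℝ) :=
            Finset.sum_le_sum fun j _ => (hgb j).2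
        _ = M.card := by simp
    rw [dyn_succ]
    constructor
    · have h1 := (ih i).1
      have h2 := le_of_lt (middleWeight_pos E i)
      have := mul_nonneg h2 (add_nonneg h1 hsum0)
      exact this
    · have hle : dyn E F fval init t i + ∑ j ∈ M, g j
          ≤ (((NinSet E i).card - 2 * ((NinSet E i).card / 3) + 1 : ℕ) : ℝ) := by
        push_cast [hMc] at hsum1 ⊢
        have := (ih i).2
        linarith
      calc middleWeight E i * (dyn E F fval init t i + ∑ j ∈ M, g j)
          ≤ middleWeight E i *
            (((NinSet E i).card - 2 * ((NinSet E i).card / 3) + 1 : ℕ) : ℝ) :=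
            mul_le_mul_of_nonneg_left hle (le_of_lt (middleWeight_pos E i))
        _ = 1 := middleWeight_mul E i

lemma mem_NinSet {E : Finset (V × V)} {u v : V} : u ∈ NinSet E v ↔ (u, v) ∈ E := by
  simp [NinSet]
lemma state_le_Umax {E : Finset (V × V)} {F : Finset V} (exec : MiddleExec E F)
    (t : ℕ) (i : V) (hi : i ∉ F) : exec.state i t ≤ Umax exec t := by
  haveI : Nonempty {i : V // i ∉ F} := ⟨⟨i, hi⟩⟩
  have := le_ciSup (f := fun i : {i : V // i ∉ F} => exec.state i.1 t)
    (Set.Finite.bddAbove (Set.finite_range _)) ⟨i, hi⟩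
  simpa [Umax] using this

lemma muMin_le_state {E : Finset (V × V)} {F : Finset V} (exec : MiddleExec E F)
    (t : ℕ) (i : V) (hi : i ∉ F) : muMin exec t ≤ exec.state i t := by
  haveI : Nonempty {i : V // i ∉ F} := ⟨⟨i, hi⟩⟩
  have := ciInf_le (f := fun i : {i : V // i ∉ F} => exec.state i.1 t)
    (Set.Finite.bddBelow (Set.finite_range _)) ⟨i, hi⟩
  simpa [muMin] using this

/-- Invariant for the two-sided construction: `L`-nodes stay at `0`, `R`-nodes stay at `1`. -/
lemma dynB_inv (E : Finset (V × V)) (F L C R : Finset V)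
    (hUnion : F ∪ L ∪ C ∪ R = Finset.univ)
    (hLR : Disjoint L R)
    (hnL : ¬ ImpRel E (C ∪ R) L) (hnR : ¬ ImpRel E (L ∪ C) R) :
    ∀ t, (∀ i ∈ L, dyn E F (fun i => if i ∈ R then 1 else 0)
            (fun i => if i ∈ R then 1 else 0) t i = 0) ∧
         (∀ i ∈ R, dyn E F (fun i => if i ∈ R then 1 else 0)
            (fun i => if i ∈ R then 1 else 0) t i = 1) := by
  set fv : V → ℝ := fun i => if i ∈ R then 1 else 0 with hfv
  have hfvb : ∀ i, 0 ≤ fv i ∧ fv i ≤ 1 := by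
    intro i; rw [hfv]; dsimp only; split <;> norm_num
  have hbnd := dyn_bound E F fv fv hfvb hfvb
  intro t
  induction t with
  | zero =>
    constructor
    · intro i hi
      have : i ∉ R := Finset.disjoint_left.1 hLR hi
      show fv i = 0
      rw [hfv]; simp [this]
    · intro i hi
      show fv i = 1
      rw [hfv]; simp [hi]
  | succ t ih =>
    have hmem : ∀ j : V, j ∈ F ∪ L ∪ C ∪ R := by
      intro j; rw [hUnion]; exact Finset.mem_univ j
    constructor
    · -- L stays at 0
      intro i hi
      have hiR : i ∉ R := Finset.disjoint_left.1 hLR hi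
      set g := rcvF F fv (dyn E F fv fv t) i with hg
      have hlo : ∀ j ∈ NinSet E i, (0:ℝ) ≤ g j := by
        intro j _
        rw [hg, rcvF]
        split
        · exact (hfvb i).1
        · exact (hbnd t j).1
      have hsubf : (NinSet E i).filter (fun j => (0:ℝ) < g j)
          ⊆ NinSet E i ∩ (C ∪ R) := by
        intro j hj
        obtain ⟨hjN, hjg⟩ := Finset.mem_filter.1 hj
        have hjF : j ∉ F := by
          intro hjF
          rw [hg, rcvF, if_pos hjF, hfv] at hjg
          simp [hiR] at hjg
        have hjL : j ∉ L := by
          intro hjL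
          rw [hg, rcvF, if_neg hjF, (ih.1 j hjL)] at hjg
          exact lt_irrefl 0 hjg
        have := hmem j
        rw [Finset.mem_union, Finset.mem_union, Finset.mem_union] at this
        rcases this with ((h | h) | h) | h
        · exact absurd h hjF
        · exact absurd h hjL
        · exact Finset.mem_inter.2 ⟨hjN, Finset.mem_union_left _ h⟩
        · exact Finset.mem_inter.2 ⟨hjN, Finset.mem_union_right _ h⟩
      have hnlt : ¬ ((NinSet E i).card < 3 * ((NinSet E i) ∩ (C ∪ R)).card) :=
        fun h => hnL ⟨i, hi, h⟩
      have hcard : ((NinSet E i).filter (fun j => (0:ℝ) < g j)).card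
          ≤ (NinSet E i).card / 3 := by
        have := Finset.card_le_card hsubf
        omega
      have hM0 := tri_M_lo (triChoice_spec g (NinSet E i)) hlo hcard
      rw [dyn_succ, ← hg, Finset.sum_eq_zero hM0, ih.1 i hi]
      ring
    · -- R stays at 1
      intro i hi
      set g := rcvF F fv (dyn E F fv fv t) i with hg
      have hhi : ∀ j ∈ NinSet E i, g j ≤ (1:ℝ) := by
        intro j _
        rw [hg, rcvF]
        split
        · exact (hfvb i).2
        · exact (hbnd t j).2
      have hsubf : (NinSet E i).filter (fun j => g j < (1:ℝ))
          ⊆ NinSet E i ∩ (L ∪ C) := by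
        intro j hj
        obtain ⟨hjN, hjg⟩ := Finset.mem_filter.1 hj
        have hjF : j ∉ F := by
          intro hjF
          rw [hg, rcvF, if_pos hjF, hfv] at hjg
          simp [hi] at hjg
        have hjR : j ∉ R := by
          intro hjR
          rw [hg, rcvF, if_neg hjF, (ih.2 j hjR)] at hjg
          exact lt_irrefl 1 hjg
        have := hmem j
        rw [Finset.mem_union, Finset.mem_union, Finset.mem_union] at this
        rcases this with ((h | h) | h) | h
        · exact absurd h hjF
        · exact Finset.mem_inter.2 ⟨hjN, Finset.mem_union_left _ h⟩
        · exact Finset.mem_inter.2 ⟨hjN, Finset.mem_union_right _ h⟩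
        · exact absurd h hjR
      have hnlt : ¬ ((NinSet E i).card < 3 * ((NinSet E i) ∩ (L ∪ C)).card) :=
        fun h => hnR ⟨i, hi, h⟩
      have hcard : ((NinSet E i).filter (fun j => g j < (1:ℝ))).card
          ≤ (NinSet E i).card / 3 := by
        have := Finset.card_le_card hsubf
        omega
      have hM1 := tri_M_hi (triChoice_spec g (NinSet E i)) hhi hcard
      have hsum : ∑ j ∈ (triChoice g (NinSet E i)).2.2, g j
          = ((triChoice g (NinSet E i)).2.2.card : ℝ) := by
        rw [Finset.sum_congr rfl hM1]
        simp
      rw [dyn_succ, ← hg, hsum, ih.2 i hi, (triChoice_spec g (NinSet E i)).cM]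
      have h2 := two_mul_div_three_le (NinSet E i).card
      calc middleWeight E i *
            (1 + (((NinSet E i).card - 2 * ((NinSet E i).card / 3) : ℕ) : ℝ))
          = middleWeight E i *
            (((NinSet E i).card - 2 * ((NinSet E i).card / 3) + 1 : ℕ) : ℝ) := by
            push_cast; ring
        _ = 1 := middleWeight_mul E i

/-- Invariant for the isolated-node construction: node `v` (with no in-neighbors)
stays at `1`, everyone else stays at `0`. -/
lemma dyn2_inv (E : Finset (V × V)) (v : V) (hv : (NinSet E v).card = 0)
    (hbig : ∀ u, v ∈ NinSet E u → 3 ≤ (NinSet E u).card) :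
    ∀ t i, dyn E ∅ (fun _ => 0) (fun i => if i = v then 1 else 0) t i
      = (if i = v then 1 else 0) := by
  set iv : V → ℝ := fun i => if i = v then 1 else 0 with hiv
  intro t
  induction t with
  | zero => intro i; rfl
  | succ t ih =>
    intro i
    set g := rcvF ∅ (fun _ => 0) (dyn E ∅ (fun _ => 0) iv t) i with hg
    have hgeq : ∀ j, g j = (if j = v then 1 else 0) := by
      intro j
      rw [hg, rcvF, if_neg (Finset.notMem_empty j), ih j]
    by_cases hiV : i = v
    · subst hiV
      have hNe : NinSet E i = ∅ := Finset.card_eq_zero.1 hv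
      have hMe : (triChoice g (NinSet E i)).2.2 = ∅ := by
        have hsub : (triChoice g (NinSet E i)).2.2 ⊆ NinSet E i := by
          conv_rhs => rw [← (triChoice_spec g (NinSet E i)).union]
          exact Finset.subset_union_right
        apply Finset.eq_empty_of_forall_notMem
        intro x hx
        have hxN := hsub hx
        rw [hNe] at hxN
        exact absurd hxN (Finset.notMem_empty x)
      have hmw : middleWeight E i = 1 := by
        rw [middleWeight, hv]; norm_num
      rw [dyn_succ, ← hg, hMe, Finset.sum_empty, hmw, ih i]
      simp
    · have hlo : ∀ j ∈ NinSet E i, (0:ℝ) ≤ g j := by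
        intro j _
        rw [hgeq j]; split <;> norm_num
      have hcard : ((NinSet E i).filter (fun j => (0:ℝ) < g j)).card
          ≤ (NinSet E i).card / 3 := by
        have hsubf : (NinSet E i).filter (fun j => (0:ℝ) < g j) ⊆ {v} := by
          intro j hj
          obtain ⟨hjN, hjg⟩ := Finset.mem_filter.1 hj
          rw [hgeq j] at hjg
          by_cases hjv : j = v
          · simp [hjv]
          · simp [hjv] at hjg
        by_cases hvN : v ∈ NinSet E i
        · have h3 := hbig i hvN
          have := Finset.card_le_card hsubf
          simp only [Finset.card_singleton] at this
          omega
        · have : (NinSet E i).filter (fun j => (0:ℝ) < g j) = ∅ := by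
            rw [Finset.eq_empty_iff_forall_notMem]
            intro j hj
            obtain ⟨hjN, hjg⟩ := Finset.mem_filter.1 hj
            rw [hgeq j] at hjg
            by_cases hjv : j = v
            · exact hvN (hjv ▸ hjN)
            · simp [hjv] at hjg
          rw [this]
          simp
      have hM0 := tri_M_lo (triChoice_spec g (NinSet E i)) hlo hcard
      rw [dyn_succ, ← hg, Finset.sum_eq_zero hM0, ih i]
      simp [hiV]
/-- Construction for part (a), main case: a node with `1 ≤ |N_v| < 3f` allows a
validity violation. -/
lemma consA (E : Finset (V × V)) (f : ℕ)
    (hloop : ∀ v : V, (v, v) ∉ E)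
    (hcorrect : MiddleCorrect E f)
    (v : V) (hv1 : 1 ≤ (NinSet E v).card) (hvlt : (NinSet E v).card < 3 * f) :
    False := by
  obtain ⟨Fa, hFaN, hFac⟩ :=
    Finset.exists_subset_card_eq (s := NinSet E v) (n := min f (NinSet E v).card)
      (min_le_right _ _)
  have hvF : v ∉ Fa := by
    intro h
    exact hloop v (mem_NinSet.1 (hFaN h))
  set fv : V → ℝ := fun i => if i = v then 1 else 0 with hfv
  set exec := mkExec E Fa fv (fun _ => 0) with hexec
  have hc := hcorrect Fa (hFac ▸ min_le_left f _) exec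
  have hval : Umax exec 1 ≤ Umax exec 0 := (hc.1 1 le_rfl).2
  haveI : Nonempty {i : V // i ∉ Fa} := ⟨⟨v, hvF⟩⟩
  have hU0 : Umax exec 0 = 0 := by
    have : ∀ i : {i : V // i ∉ Fa}, exec.state i.1 0 = 0 := fun i => rfl
    rw [Umax]
    simp only [this]
    exact ciSup_const
  -- the state of v after one step is at least `middleWeight E v > 0`
  set g := rcvF Fa fv (dyn E Fa fv (fun _ => 0) 0) v with hg
  have hgeq : ∀ j, g j = (if j ∈ Fa then 1 else 0) := by
    intro j
    rw [hg, rcvF, hfv]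
    split
    · simp
    · rfl
  have hpos : ∀ j ∈ NinSet E v, (0:ℝ) ≤ g j := by
    intro j _
    rw [hgeq j]; split <;> norm_num
  have hones : (NinSet E v).card / 3
      < ((NinSet E v).filter (fun j => (1:ℝ) ≤ g j)).card := by
    have hsub : Fa ⊆ (NinSet E v).filter (fun j => (1:ℝ) ≤ g j) := by
      intro j hj
      refine Finset.mem_filter.2 ⟨hFaN hj, ?_⟩
      rw [hgeq j, if_pos hj]
    have hle := Finset.card_le_card hsub
    rw [hFac] at hle
    omega
  have hM : (triChoice g (NinSet E v)).2.2.Nonempty := by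
    rw [← Finset.card_pos, (triChoice_spec g (NinSet E v)).cM]
    omega
  have hsum := tri_sum_ge_one (triChoice_spec g (NinSet E v)) hpos hones hM
  have hstate : middleWeight E v ≤ exec.state v 1 := by
    show middleWeight E v ≤ dyn E Fa fv (fun _ => 0) 1 v
    rw [dyn_succ, ← hg]
    have h0 : dyn E Fa fv (fun _ => 0) 0 v = 0 := rfl
    rw [h0]
    calc middleWeight E v = middleWeight E v * 1 := (mul_one _).symm
      _ ≤ middleWeight E v * (0 + ∑ j ∈ (triChoice g (NinSet E v)).2.2, g j) := by
          apply mul_le_mul_of_nonneg_left _ (le_of_lt (middleWeight_pos E v))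
          linarith
  have hUv := state_le_Umax exec 1 v hvF
  have hmw := middleWeight_pos E v
  rw [hU0] at hval
  linarith


/-- necessity of the two conditions. -/
theorem necessary_condition
    (E : Finset (V × V)) (f : ℕ)
    (hn : 2 ≤ Fintype.card V)
    (hloop : ∀ v : V, (v, v) ∉ E)
    (hcorrect : MiddleCorrect E f) :
    (∀ v : V, 3 * f ≤ (NinSet E v).card) ∧
    (∀ F L C R : Finset V,
      F ∪ L ∪ C ∪ R = Finset.univ →
      Disjoint F L → Disjoint F C → Disjoint F R →
      Disjoint L C → Disjoint L R → Disjoint C R →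
      L.Nonempty → R.Nonempty → F.card ≤ f →
      ImpRel E (C ∪ R) L ∨ ImpRel E (L ∪ C) R) := by
  constructor
  · -- part (a)
    intro v
    by_contra hlt
    push_neg at hlt
    by_cases hex : ∃ u : V, 1 ≤ (NinSet E u).card ∧ (NinSet E u).card < 3 * f
    · obtain ⟨u, hu1, hu2⟩ := hex
      exact consA E f hloop hcorrect u hu1 hu2
    · push_neg at hex
      have hv0 : (NinSet E v).card = 0 := by
        by_contra h
        have h1 : 1 ≤ (NinSet E v).card := by omega
        exact absurd hlt (not_lt.2 (hex v h1))
      have hbig : ∀ u, v ∈ NinSet E u → 3 ≤ (NinSet E u).card := by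
        intro u hu
        have h1 : 1 ≤ (NinSet E u).card := Finset.card_pos.2 ⟨v, hu⟩
        have := hex u h1
        omega
      set exec := mkExec E ∅ (fun _ => (0:ℝ)) (fun i => if i = v then 1 else 0)
        with hexec
      have hinv := dyn2_inv E v hv0 hbig
      have hc := hcorrect ∅ (by simp) exec
      obtain ⟨u, huv⟩ := Fintype.exists_ne_of_one_lt_card (by omega) v
      have hkey : ∀ t, 1 ≤ Umax exec t - muMin exec t := by
        intro t
        have h1 : exec.state v t = 1 := by
          show dyn E ∅ _ _ t v = 1
          rw [hinv t v]; simp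
        have h2 : exec.state u t = 0 := by
          show dyn E ∅ _ _ t u = 0
          rw [hinv t u]; simp [huv]
        have hU := state_le_Umax exec t v (Finset.notMem_empty v)
        have hm := muMin_le_state exec t u (Finset.notMem_empty u)
        rw [h1] at hU
        rw [h2] at hm
        linarith
      have := ge_of_tendsto' hc.2 hkey
      linarith
  · -- part (b)
    intro F L C R hUnion hFL hFC hFR hLC hLR hCR hLne hRne hFf
    by_contra hno
    rw [not_or] at hno
    obtain ⟨hnL, hnR⟩ := hno
    set fv : V → ℝ := fun i => if i ∈ R then 1 else 0 with hfv
    set exec := mkExec E F fv fv with hexec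
    have hinv := dynB_inv E F L C R hUnion hLR hnL hnR
    have hc := hcorrect F hFf exec
    obtain ⟨l, hl⟩ := hLne
    obtain ⟨r, hr⟩ := hRne
    have hlF : l ∉ F := Finset.disjoint_right.1 hFL hl
    have hrF : r ∉ F := Finset.disjoint_right.1 hFR hr
    have hkey : ∀ t, 1 ≤ Umax exec t - muMin exec t := by
      intro t
      have h1 : exec.state r t = 1 := (hinv t).2 r hr
      have h2 : exec.state l t = 0 := (hinv t).1 l hl
      have hU := state_le_Umax exec t r hrF
      have hm := muMin_le_state exec t l hlF
      rw [h1] at hU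
      rw [h2] at hm
      linarith
    have := ge_of_tendsto' hc.2 hkey
    linarith
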